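/- For all integers n ≥ 1 and 1 ≤ r ≤ n−1, the derivative of the function y ↦ binom(y+n−r, n) evaluated at y = −1 equals (−1)^r / (n · C(n−1, r)). -/

import Mathlib

/-- The generalized binomial coefficient `binom(y, k) = y(y−1)⋯(y−k+1)/k!`, for real `y`. -/
noncomputable def binomR (y : ℝ) (k : ℕ) : ℝ := (∏ i ∈ Finset.range k, (y - (i : ℝ))) / (k.factorial : ℝ)

lemma prod_range_cast_succ (m : ℕ) : ∏ k ∈ Finset.range m, ((k : ℝ) + 1) = m.factorial := by
  induction m with
  | zero => simp
  | succ m ih => rw [Finset.prod_range_succ, ih]; push_cast [Nat.factorial_succ]; ring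

lemma prod_range_desc (m : ℕ) : ∏ j ∈ Finset.range m, ((m : ℝ) - j) = m.factorial := by
  induction m with
  | zero => simp
  | succ m ih =>
    rw [Finset.prod_range_succ']
    have : (∏ j ∈ Finset.range m, ((m : ℝ) + 1 - (j + 1))) = m.factorial := by
      rw [← ih]; apply Finset.prod_congr rfl; intro j _; ring
    push_cast at this ⊢
    rw [this, Nat.factorial_succ]; push_cast; ring

lemma prod_ico_part (j0 n : ℕ) (h : j0 < n) :
    ∏ j ∈ Finset.Ico (j0 + 1) n, ((j0 : ℝ) - j) = (-1) ^ (n - 1 - j0) * (n - 1 - j0).factorial := by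
  rw [Finset.prod_Ico_eq_prod_range]
  have hm : n - (j0 + 1) = n - 1 - j0 := by omega
  rw [hm]
  have : ∀ k ∈ Finset.range (n - 1 - j0), ((j0 : ℝ) - ((j0 + 1 + k : ℕ) : ℝ)) = -((k : ℝ) + 1) := by
    intro k _; push_cast; ring
  rw [Finset.prod_congr rfl this]
  rw [show (fun k : ℕ => -((k : ℝ) + 1)) = fun k : ℕ => (-1) * ((k : ℝ) + 1) by funext k; ring]
  rw [Finset.prod_mul_distrib, Finset.prod_const, Finset.card_range, prod_range_cast_succ]

lemma prod_erase_eval (j0 n : ℕ) (h : j0 < n) :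
    ∏ j ∈ (Finset.range n).erase j0, ((j0 : ℝ) - j) =
      (-1) ^ (n - 1 - j0) * j0.factorial * (n - 1 - j0).factorial := by
  have hset : (Finset.range n).erase j0 = Finset.range j0 ∪ Finset.Ico (j0 + 1) n := by
    ext x
    simp only [Finset.mem_erase, Finset.mem_range, Finset.mem_union, Finset.mem_Ico]
    omega
  have hdisj : Disjoint (Finset.range j0) (Finset.Ico (j0 + 1) n) := by
    rw [Finset.disjoint_left]
    intro x hx hx'
    simp only [Finset.mem_range] at hx
    simp only [Finset.mem_Ico] at hx'
    omega
  rw [hset, Finset.prod_union hdisj, prod_range_desc, prod_ico_part j0 n h]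
  ring

/-- For all integers `n ≥ 1` and `1 ≤ r ≤ n−1`, the derivative of
`y ↦ binom(y+n−r, n)` at `y = −1` equals `(−1)^r / (n C(n−1, r))`. -/
theorem deriv_binom_shift_at_neg_one (n r : ℕ) (hn : 1 ≤ n) (hr1 : 1 ≤ r) (hr : r ≤ n - 1) :
    deriv (fun y : ℝ => binomR (y + (n : ℝ) - (r : ℝ)) n) (-1) =
      (-1 : ℝ) ^ r / ((n : ℝ) * ((n - 1).choose r : ℝ)) := by
  have hrn : r + 1 ≤ n := by omega
  set j0 : ℕ := n - 1 - r with hj0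
  have hj0n : j0 < n := by omega
  have hcast : (j0 : ℝ) = (n : ℝ) - 1 - r := by
    rw [hj0]; push_cast [Nat.cast_sub (show r ≤ n - 1 by omega), Nat.cast_sub hn]; ring
  -- the function equals a product divided by n!
  have hfun : (fun y : ℝ => binomR (y + (n : ℝ) - (r : ℝ)) n) =
      fun y : ℝ => (∏ i ∈ Finset.range n, (y + (n : ℝ) - r - i)) / n.factorial := by
    funext y; simp [binomR, sub_sub, add_sub_assoc]
  rw [hfun]
  have hder : HasDerivAt (fun y : ℝ => ∏ i ∈ Finset.range n, (y + (n : ℝ) - r - i))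
      (∑ i ∈ Finset.range n,
        (∏ j ∈ (Finset.range n).erase i, ((-1 : ℝ) + (n : ℝ) - r - j)) • (1 : ℝ)) (-1) := by
    apply HasDerivAt.fun_finsetProd
    intro i _
    have heq : (fun y : ℝ => y + (n : ℝ) - r - i) = fun y : ℝ => y + ((n : ℝ) - r - i) := by
      funext y; ring
    rw [heq]
    exact (hasDerivAt_id _).add_const _
  have hD := (hder.div_const (n.factorial : ℝ)).deriv
  rw [hD]
  -- reduce the sum to the single term i = j0
  have hsum : (∑ i ∈ Finset.range n,
      (∏ j ∈ (Finset.range n).erase i, ((-1 : ℝ) + (n : ℝ) - r - j)) • (1 : ℝ)) =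
      ∏ j ∈ (Finset.range n).erase j0, ((-1 : ℝ) + (n : ℝ) - r - j) := by
    rw [Finset.sum_eq_single j0]
    · simp
    · intro i hi hne
      have hz : ((-1 : ℝ) + (n : ℝ) - r - j0) = 0 := by rw [hcast]; ring
      rw [Finset.prod_eq_zero (Finset.mem_erase.mpr ⟨hne.symm, Finset.mem_range.mpr hj0n⟩) hz]
      simp
    · intro h; exact absurd (Finset.mem_range.mpr hj0n) h
  rw [hsum]
  have hprod : (∏ j ∈ (Finset.range n).erase j0, ((-1 : ℝ) + (n : ℝ) - r - j)) =
      (-1) ^ r * j0.factorial * r.factorial := by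
    have : ∀ j ∈ (Finset.range n).erase j0, ((-1 : ℝ) + (n : ℝ) - r - j) = (j0 : ℝ) - j := by
      intro j _; rw [hcast]; ring
    rw [Finset.prod_congr rfl this, prod_erase_eval j0 n hj0n]
    have : n - 1 - j0 = r := by omega
    rw [this]
  rw [hprod]
  -- final arithmetic
  have hfact : ((n - 1).choose r : ℝ) * r.factorial * j0.factorial * n = n.factorial := by
    have h1 : (n - 1).choose r * r.factorial * (n - 1 - r).factorial = (n - 1).factorial :=
      Nat.choose_mul_factorial_mul_factorial hr
    have h2 : n * (n - 1).factorial = n.factorial := Nat.mul_factorial_pred (by omega)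
    have : (n - 1).choose r * r.factorial * (n - 1 - r).factorial * n = n.factorial := by
      rw [h1, Nat.mul_comm, h2]
    exact_mod_cast this
  have hne1 : (n.factorial : ℝ) ≠ 0 := by positivity
  have hne2 : (n : ℝ) ≠ 0 := by positivity
  have hne3 : ((n - 1).choose r : ℝ) ≠ 0 := Nat.cast_ne_zero.mpr (Nat.choose_pos hr).ne'
  rw [div_eq_div_iff hne1 (by positivity)]
  rw [← hfact]; ring
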